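/- Let k > 1 divide n with n/k > 2, and let Γ be the graph whose vertices are the partitions of {1,...,n} into parts of size k, with two partitions adjacent exactly when they share no common part. Then Γ is neither null nor complete and χ(Γ) = ω(Γ); i.e., Γ is non-synchronizing. -/

import Mathlib

open SimpleGraph

/-- The type of partitions of `{1,...,n}` into parts of size `k`, encoded as finsets
of `k`-subsets of `Fin n` such that every point lies in exactly one part. -/
def KPartition (n k : ℕ) : Type :=
  {P : Finset (Finset (Fin n)) // (∀ s ∈ P, s.card = k) ∧
    ∀ x : Fin n, ∃! s, s ∈ P ∧ x ∈ s}

noncomputable instance (n k : ℕ) : Fintype (KPartition n k) := by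
  unfold KPartition; exact Fintype.ofFinite _

/-- The graph whose vertices are the partitions of `{1,...,n}` into `k`-subsets, with
two partitions adjacent exactly when they have no part in common. -/
def kPartitionGraph (n k : ℕ) : SimpleGraph (KPartition n k) where
  Adj P Q := P ≠ Q ∧ Disjoint P.1 Q.1
  symm := ⟨fun P Q h => ⟨h.1.symm, h.2.symm⟩⟩
  loopless := ⟨fun P h => h.1 rfl⟩

open Finset

lemma mcard_sum {α : Type*} (s : Multiset (Multiset α)) :
    Multiset.card s.sum = (s.map Multiset.card).sum := by
  induction s using Multiset.induction with
  | empty => simp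
  | cons a s ih => simp [ih]

lemma filt_card (n m : ℕ) (hm : m ≤ n) :
    (Finset.univ.filter (fun x : Fin n => x.val < m)).card = m := by
  have : (Finset.univ.filter (fun x : Fin n => x.val < m)) =
      (Finset.range m).attachFin (fun a ha => lt_of_lt_of_le (mem_range.mp ha) hm) := by
    ext x; simp [Finset.mem_attachFin]
  rw [this, Finset.card_attachFin, Finset.card_range]

lemma filt_succ (n m : ℕ) (hm : m < n) :
    (Finset.univ.filter (fun x : Fin n => x.val < m + 1)) =
      insert (⟨m, hm⟩ : Fin n) (Finset.univ.filter (fun x : Fin n => x.val < m)) := by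
  ext x
  simp only [mem_filter, mem_univ, true_and, mem_insert]
  constructor
  · intro h
    rcases Nat.lt_succ_iff_lt_or_eq.mp h with h | h
    · exact Or.inr h
    · exact Or.inl (Fin.ext h)
  · rintro (rfl | h)
    · exact Nat.lt_succ_self m
    · exact Nat.lt_succ_of_lt h

lemma pascal' {a b : ℕ} (ha : 0 < a) (hb : 0 < b) :
    a.choose b = (a-1).choose (b-1) + (a-1).choose b := by
  obtain ⟨a', rfl⟩ := Nat.exists_eq_add_of_lt ha
  obtain ⟨b', rfl⟩ := Nat.exists_eq_add_of_lt hb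
  simp only [Nat.zero_add, Nat.add_sub_cancel]
  exact Nat.choose_succ_succ _ _

lemma choose_mul_id {a b : ℕ} (ha : 0 < a) (hb : 0 < b) :
    a.choose b * b = a * (a-1).choose (b-1) := by
  obtain ⟨a', rfl⟩ := Nat.exists_eq_add_of_lt ha
  obtain ⟨b', rfl⟩ := Nat.exists_eq_add_of_lt hb
  simp only [Nat.zero_add, Nat.add_sub_cancel]
  rw [← Nat.add_one_mul_choose_eq]

lemma baranyai_step (n k : ℕ) (hk : 1 < k) (hdvd : k ∣ n) (m : ℕ) (hm : m < n)
    (f : Fin ((n-1).choose (k-1)) → Multiset (Finset (Fin n)))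
    (h1 : ∀ i, Multiset.card (f i) = n / k)
    (h2 : ∀ i, ((f i).map Finset.val).sum = (Finset.univ.filter (fun x : Fin n => x.val < m)).val)
    (h3 : ∀ i, ∀ S ∈ f i, S.card ≤ k)
    (h4 : ∀ S : Finset (Fin n), (∀ x ∈ S, x.val < m) → S.card ≤ k →
        (∑ i, (f i).count S) = (n - m).choose (k - S.card)) :
    ∃ f' : Fin ((n-1).choose (k-1)) → Multiset (Finset (Fin n)),
      (∀ i, Multiset.card (f' i) = n / k) ∧
      (∀ i, ((f' i).map Finset.val).sum =
        (Finset.univ.filter (fun x : Fin n => x.val < m+1)).val) ∧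
      (∀ i, ∀ S ∈ f' i, S.card ≤ k) ∧
      (∀ S : Finset (Fin n), (∀ x ∈ S, x.val < m+1) → S.card ≤ k →
        (∑ i, (f' i).count S) = (n - (m+1)).choose (k - S.card)) := by
  classical
  -- members of families have elements < m
  have hmem : ∀ i, ∀ S ∈ f i, ∀ x ∈ S, x.val < m := by
    intro i S hS x hx
    have hle : S.val ≤ ((f i).map Finset.val).sum :=
      Multiset.single_le_sum (fun y _ => Multiset.zero_le y) _
        (Multiset.mem_map_of_mem _ hS)
    have : x ∈ (Finset.univ.filter (fun x : Fin n => x.val < m)).val := by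
      rw [← h2 i]; exact Multiset.mem_of_le hle hx
    simpa using (Finset.mem_filter.mp (Finset.mem_val.mp this)).2
  -- sum of cards of members = m
  have hcardsum : ∀ i, ((f i).map (fun S => S.card)).sum = m := by
    intro i
    have hc := congrArg Multiset.card (h2 i)
    rw [mcard_sum, Multiset.map_map] at hc
    have hcomp : (Multiset.card ∘ Finset.val : Finset (Fin n) → ℕ) = Finset.card := rfl
    rw [hcomp] at hc
    have h' : Multiset.card (Finset.univ.filter (fun x : Fin n => x.val < m)).val = m :=
      filt_card n m hm.le
    rw [h'] at hc
    exact hc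
  -- per-family weight
  have hwsum : ∀ i, ((f i).map (fun S => k - S.card)).sum = n - m := by
    intro i
    have hsum : ((f i).map (fun S => (k - S.card) + S.card)).sum =
        ((f i).map (fun _ => k)).sum := by
      refine congrArg Multiset.sum (Multiset.map_congr rfl ?_)
      intro S hS; rw [Nat.sub_add_cancel (h3 i S hS)]
    rw [Multiset.sum_map_add, hcardsum] at hsum
    have hconst : ((f i).map (fun _ : Finset (Fin n) => k)).sum = n := by
      rw [Multiset.map_const', Multiset.sum_replicate, h1 i, smul_eq_mul,
        Nat.div_mul_cancel hdvd]
    rw [hconst] at hsum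
    omega
  have hnm : 0 < n - m := by omega
  -- Hall setup
  set d : Finset (Fin n) → ℕ := fun S => (n - m - 1).choose (k - S.card - 1) with hd
  set t : Fin ((n-1).choose (k-1)) → Finset (Finset (Fin n) × ℕ) := fun i =>
    ((f i).toFinset.filter (fun S => S.card < k)).biUnion
      (fun S => {S} ×ˢ Finset.range (d S)) with ht
  have hts : ∀ i p, p ∈ t i ↔ p.1 ∈ f i ∧ p.1.card < k ∧ p.2 < d p.1 := by
    intro i p
    simp only [ht, Finset.mem_biUnion, Finset.mem_filter, Multiset.mem_toFinset,
      Finset.mem_product, Finset.mem_singleton, Finset.mem_range]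
    constructor
    · rintro ⟨S, ⟨hS, hSk⟩, rfl, h2'⟩; exact ⟨hS, hSk, h2'⟩
    · rintro ⟨hS, hSk, h2'⟩; exact ⟨p.1, ⟨hS, hSk⟩, rfl, h2'⟩
  -- card of biUnion of pair-sets
  have hcardbi : ∀ V : Finset (Finset (Fin n)),
      (V.biUnion (fun S => {S} ×ˢ Finset.range (d S))).card = ∑ S ∈ V, d S := by
    intro V
    rw [Finset.card_biUnion]
    · refine Finset.sum_congr rfl fun S _ => ?_
      rw [Finset.card_product, Finset.card_singleton, Finset.card_range, one_mul]
    · intro S _ T _ hST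
      refine Finset.disjoint_left.mpr fun p hp hq => hST ?_
      rw [Finset.mem_product, Finset.mem_singleton] at hp hq
      rw [← hp.1, ← hq.1]
  -- Hall's condition
  have hall : ∀ W : Finset (Fin ((n-1).choose (k-1))), W.card ≤ (W.biUnion t).card := by
    intro W
    set V : Finset (Finset (Fin n)) :=
      W.biUnion (fun i => (f i).toFinset.filter (fun S => S.card < k)) with hV
    have hbi : W.biUnion t = V.biUnion (fun S => {S} ×ˢ Finset.range (d S)) := by
      rw [hV, ht, Finset.biUnion_biUnion]
    rw [hbi, hcardbi]
    have hVmem : ∀ S ∈ V, S.card < k ∧ (∀ x ∈ S, x.val < m) ∧ S.card ≤ k := by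
      intro S hS
      rw [hV, Finset.mem_biUnion] at hS
      obtain ⟨i, _, hi⟩ := hS
      rw [Finset.mem_filter, Multiset.mem_toFinset] at hi
      exact ⟨hi.2, hmem i S hi.1, (h3 i S hi.1)⟩
    have key : (n - m) * W.card ≤ (n - m) * ∑ S ∈ V, d S := by
      calc (n - m) * W.card = ∑ _i ∈ W, (n - m) := by
            rw [Finset.sum_const, smul_eq_mul, mul_comm]
        _ = ∑ i ∈ W, ((f i).map (fun S => k - S.card)).sum :=
            Finset.sum_congr rfl fun i _ => (hwsum i).symm
        _ = ∑ i ∈ W, ∑ S ∈ V, (f i).count S * (k - S.card) := by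
            refine Finset.sum_congr rfl fun i hi => ?_
            rw [Finset.sum_multiset_map_count]
            simp only [smul_eq_mul]
            rw [← Finset.sum_filter_of_ne (s := (f i).toFinset)
              (p := fun S => S.card < k)
              (f := fun S => (f i).count S * (k - S.card))
              (fun S hS hne => by
                rw [Multiset.mem_toFinset] at hS
                have := h3 i S hS
                rcases lt_or_eq_of_le this with h | h
                · exact h
                · exfalso; apply hne
                  show Multiset.count S (f i) * (k - S.card) = 0
                  rw [h, Nat.sub_self, mul_zero])]
            refine Finset.sum_subset ?_ ?_
            · intro S hS
              rw [hV, Finset.mem_biUnion]; exact ⟨i, hi, hS⟩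
            · intro S hSV hS
              rcases Nat.eq_zero_or_pos ((f i).count S) with h0 | h0
              · rw [h0, zero_mul]
              · exfalso
                apply hS
                rw [Finset.mem_filter, Multiset.mem_toFinset]
                exact ⟨Multiset.count_pos.mp h0, (hVmem S hSV).1⟩
        _ = ∑ S ∈ V, (∑ i ∈ W, (f i).count S) * (k - S.card) := by
            rw [Finset.sum_comm]
            exact Finset.sum_congr rfl fun S _ => (Finset.sum_mul ..).symm
        _ ≤ ∑ S ∈ V, (∑ i, (f i).count S) * (k - S.card) := by
            refine Finset.sum_le_sum fun S _ => Nat.mul_le_mul_right _ ?_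
            exact Finset.sum_le_sum_of_subset (Finset.subset_univ W)
        _ = ∑ S ∈ V, (n - m) * d S := by
            refine Finset.sum_congr rfl fun S hS => ?_
            obtain ⟨hSk, hSm, hSle⟩ := hVmem S hS
            rw [h4 S hSm hSle]
            exact choose_mul_id hnm (by omega)
        _ = (n - m) * ∑ S ∈ V, d S := (Finset.mul_sum ..).symm
    exact Nat.le_of_mul_le_mul_left key hnm
  obtain ⟨g, ginj, hg⟩ := (Finset.all_card_le_biUnion_card_iff_exists_injective t).mp hall
  set σ : Fin ((n-1).choose (k-1)) → Finset (Fin n) := fun i => (g i).1 with hσ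
  have hσmem : ∀ i, σ i ∈ f i := fun i => ((hts i (g i)).mp (hg i)).1
  have hσk : ∀ i, (σ i).card < k := fun i => ((hts i (g i)).mp (hg i)).2.1
  have hσd : ∀ i, (g i).2 < d (σ i) := fun i => ((hts i (g i)).mp (hg i)).2.2
  have hσlt : ∀ i, ∀ x ∈ σ i, x.val < m := fun i => hmem i (σ i) (hσmem i)
  -- the fiber counting lemma
  have hfib : ∀ S : Finset (Fin n), (∀ x ∈ S, x.val < m) → S.card < k →
      (Finset.univ.filter (fun i => σ i = S)).card = d S := by
    set R : Finset (Fin n) := Finset.univ.filter (fun x => x.val < m) with hR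
    set E : Finset (Finset (Fin n)) :=
      (Finset.range k).biUnion (fun j => Finset.powersetCard j R) with hE
    have hEmem : ∀ S, S ∈ E ↔ ((∀ x ∈ S, x.val < m) ∧ S.card < k) := by
      intro S
      simp only [hE, Finset.mem_biUnion, Finset.mem_range, Finset.mem_powersetCard]
      constructor
      · rintro ⟨j, hj, hsub, rfl⟩
        exact ⟨fun x hx => (Finset.mem_filter.mp (hsub hx)).2, hj⟩
      · rintro ⟨hlt, hk'⟩
        exact ⟨S.card, hk', fun x hx => Finset.mem_filter.mpr ⟨Finset.mem_univ x, hlt x hx⟩, rfl⟩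
    have hle : ∀ S ∈ E, (Finset.univ.filter (fun i => σ i = S)).card ≤ d S := by
      intro S _
      have hcr : d S = (Finset.range (d S)).card := (Finset.card_range _).symm
      rw [hcr]
      refine Finset.card_le_card_of_injOn (fun i => (g i).2) ?_ ?_
      · intro i hi
        rw [Finset.mem_coe, Finset.mem_filter] at hi
        rw [Finset.mem_coe, Finset.mem_range, ← hi.2]
        exact hσd i
      · intro i hi j hj hij
        simp only [Finset.coe_filter, Set.mem_setOf_eq] at hi hj
        apply ginj
        have : σ i = σ j := by rw [hi.2, hj.2]
        exact Prod.ext this hij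
    have hsuma : ∑ S ∈ E, (Finset.univ.filter (fun i => σ i = S)).card =
        (n-1).choose (k-1) := by
      rw [← Finset.card_eq_sum_card_fiberwise (f := σ) (s := Finset.univ) (t := E)
        (fun i _ => (hEmem (σ i)).mpr ⟨hσlt i, hσk i⟩)]
      simp
    have hsumd : ∑ S ∈ E, d S = (n-1).choose (k-1) := by
      rw [hE, Finset.sum_biUnion]
      · have hinner : ∀ j ∈ Finset.range k,
            ∑ S ∈ Finset.powersetCard j R, d S = m.choose j * (n-m-1).choose (k-1-j) := by
          intro j hj
          have : ∀ S ∈ Finset.powersetCard j R, d S = (n-m-1).choose (k-1-j) := by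
            intro S hS
            have hcard := (Finset.mem_powersetCard.mp hS).2
            simp only [hd]
            rw [hcard]
            congr 1
            omega
          rw [Finset.sum_congr rfl this, Finset.sum_const, smul_eq_mul,
            Finset.card_powersetCard]
          congr 2
          rw [hR, filt_card n m hm.le]
        rw [Finset.sum_congr rfl hinner]
        have hvan := Nat.add_choose_eq m (n-m-1) (k-1)
        rw [Finset.Nat.sum_antidiagonal_eq_sum_range_succ_mk] at hvan
        have hmn' : m + (n - m - 1) = n - 1 := by omega
        have hk1 : (k-1).succ = k := by omega
        rw [hmn', hk1] at hvan
        exact hvan.symm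
      · intro a _ b _ hab
        exact R.pairwise_disjoint_powersetCard hab
    -- termwise equality
    have hterm : ∀ S ∈ E, (Finset.univ.filter (fun i => σ i = S)).card = d S := by
      intro S hS
      by_contra hne
      have hlt : (Finset.univ.filter (fun i => σ i = S)).card < d S :=
        lt_of_le_of_ne (hle S hS) hne
      have := Finset.sum_lt_sum hle ⟨S, hS, hlt⟩
      rw [hsuma, hsumd] at this
      exact lt_irrefl _ this
    intro S hSm hSk
    exact hterm S ((hEmem S).mpr ⟨hSm, hSk⟩)
  -- the new families
  set xm : Fin n := ⟨m, hm⟩ with hxm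
  have hxmσ : ∀ i, xm ∉ σ i := by
    intro i hmem'
    have := hσlt i xm hmem'
    simp [hxm] at this
  set T : Fin ((n-1).choose (k-1)) → Finset (Fin n) := fun i => insert xm (σ i) with hT
  set r : Fin ((n-1).choose (k-1)) → Multiset (Finset (Fin n)) :=
    fun i => (f i).erase (σ i) with hr
  have hfi : ∀ i, f i = σ i ::ₘ r i := fun i => (Multiset.cons_erase (hσmem i)).symm
  refine ⟨fun i => T i ::ₘ r i, ?_, ?_, ?_, ?_⟩
  · intro i
    have := h1 i
    rw [hfi i] at this
    simpa using this
  · intro i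
    have hTval : (T i).val = xm ::ₘ (σ i).val := by
      rw [hT]
      exact Finset.insert_val_of_notMem (hxmσ i)
    have hnf : xm ∉ Finset.univ.filter (fun x : Fin n => x.val < m) := by
      simp [hxm]
    rw [filt_succ n m hm, Finset.insert_val_of_notMem hnf]
    have hold := h2 i
    rw [hfi i] at hold
    simp only [Multiset.map_cons, Multiset.sum_cons] at hold
    simp only [Multiset.map_cons, Multiset.sum_cons, hTval]
    rw [← hold, Multiset.cons_add]
  · intro i S hS
    rcases Multiset.mem_cons.mp hS with rfl | hS'
    · rw [hT, Finset.card_insert_of_notMem (hxmσ i)]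
      exact hσk i
    · exact h3 i S (Multiset.mem_of_mem_erase hS')
  · intro S hSlt hSk
    -- count identities
    have hcount' : ∀ i, Multiset.count S (T i ::ₘ r i) =
        (r i).count S + (if S = T i then 1 else 0) := by
      intro i; rw [Multiset.count_cons]
    have hcount : ∀ i, Multiset.count S (f i) =
        (r i).count S + (if S = σ i then 1 else 0) := by
      intro i; rw [hfi i, Multiset.count_cons]
    by_cases hxS : xm ∈ S
    · -- S contains xm
      set S₀ : Finset (Fin n) := S.erase xm with hS₀
      have hxS₀ : xm ∉ S₀ := Finset.notMem_erase _ _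
      have hS₀lt : ∀ x ∈ S₀, x.val < m := by
        intro x hx
        have hx' : x ∈ S := Finset.mem_of_mem_erase hx
        have hxne : x ≠ xm := Finset.ne_of_mem_erase hx
        have := hSlt x hx'
        have : x.val ≠ m := fun h => hxne (Fin.ext h)
        omega
      have hcS : S.card = S₀.card + 1 := by
        rw [hS₀, Finset.card_erase_of_mem hxS]
        have : 0 < S.card := Finset.card_pos.mpr ⟨xm, hxS⟩
        omega
      have hS₀k : S₀.card < k := by omega
      have hfS : ∀ i, Multiset.count S (f i) = 0 := by
        intro i
        rw [Multiset.count_eq_zero]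
        intro hmem'
        exact absurd (hmem i S hmem' xm hxS) (by simp [hxm])
      have hσS : ∀ i, S ≠ σ i := by
        intro i h
        exact hxmσ i (h ▸ hxS)
      have hTS : ∀ i, (S = T i) ↔ (σ i = S₀) := by
        intro i
        constructor
        · intro h
          have h2' : S.erase xm = σ i := by
            rw [h]; exact Finset.erase_insert (hxmσ i)
          exact h2'.symm
        · intro h
          have h2' : insert xm S₀ = S := Finset.insert_erase hxS
          rw [← h2']
          show insert xm S₀ = insert xm (σ i)
          rw [h]
      calc ∑ i, Multiset.count S (T i ::ₘ r i)
          = ∑ i, ((r i).count S + (if S = T i then 1 else 0)) :=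
            Finset.sum_congr rfl fun i _ => hcount' i
        _ = ∑ i, (if σ i = S₀ then 1 else 0) := by
            refine Finset.sum_congr rfl fun i _ => ?_
            have h0 : (r i).count S = 0 := by
              have := hfS i
              rw [hcount i] at this
              omega
            rw [h0, zero_add, if_congr (hTS i) rfl rfl]
        _ = (Finset.univ.filter (fun i => σ i = S₀)).card := by
            rw [Finset.card_filter]
        _ = d S₀ := hfib S₀ hS₀lt hS₀k
        _ = (n - (m+1)).choose (k - S.card) := by
            show (n - m - 1).choose (k - S₀.card - 1) = (n - (m+1)).choose (k - S.card)
            have e1 : n - (m+1) = n - m - 1 := by omega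
            have e2 : k - S₀.card - 1 = k - S.card := by omega
            rw [e1, e2]
    · -- xm ∉ S
      have hSlt' : ∀ x ∈ S, x.val < m := by
        intro x hx
        have := hSlt x hx
        have : x.val ≠ m := fun h => hxS (by rwa [show x = xm from Fin.ext h] at hx)
        omega
      have hTS : ∀ i, S ≠ T i := by
        intro i h
        apply hxS
        rw [h, hT]
        exact Finset.mem_insert_self _ _
      have hnew : ∀ i, Multiset.count S (T i ::ₘ r i) = (r i).count S := by
        intro i
        rw [hcount' i, if_neg (hTS i), add_zero]
      rcases lt_or_eq_of_le hSk with hck | hck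
      · -- card < k
        have hfilt : ∑ i, (if S = σ i then 1 else 0) = d S := by
          have : ∀ i, (S = σ i) ↔ (σ i = S) := fun i => eq_comm
          calc ∑ i, (if S = σ i then 1 else 0)
              = (Finset.univ.filter (fun i => S = σ i)).card := by rw [Finset.card_filter]
            _ = (Finset.univ.filter (fun i => σ i = S)).card := by
                congr 1; ext i; simp [eq_comm]
            _ = d S := hfib S hSlt' hck
        have hold := h4 S hSlt' hSk
        have hsum2 : ∑ i, Multiset.count S (f i) =
            ∑ i, (r i).count S + ∑ i, (if S = σ i then 1 else 0) := by
          rw [← Finset.sum_add_distrib]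
          exact Finset.sum_congr rfl fun i _ => hcount i
        have hpascal : (n - m).choose (k - S.card) =
            (n - m - 1).choose (k - S.card - 1) + (n - m - 1).choose (k - S.card) := by
          exact pascal' (by omega) (by omega)
        have hgoal : ∑ i, (r i).count S = (n - (m+1)).choose (k - S.card) := by
          have hd' : d S = (n - m - 1).choose (k - S.card - 1) := rfl
          have h3' : (n - (m+1)) = n - m - 1 := by omega
          rw [h3']
          omega
        rw [Finset.sum_congr rfl fun i _ => hnew i]
        exact hgoal
      · -- card = k
        have hσS : ∀ i, S ≠ σ i := by
          intro i h
          have := hσk i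
          rw [← h, ← hck] at this
          exact lt_irrefl _ this
        calc ∑ i, Multiset.count S (T i ::ₘ r i)
            = ∑ i, (r i).count S := Finset.sum_congr rfl fun i _ => hnew i
          _ = ∑ i, Multiset.count S (f i) := by
              refine Finset.sum_congr rfl fun i _ => ?_
              rw [hcount i, if_neg (hσS i), add_zero]
          _ = (n - m).choose (k - S.card) := h4 S hSlt' hSk
          _ = (n - (m+1)).choose (k - S.card) := by
              rw [← hck, Nat.sub_self, Nat.choose_zero_right, Nat.choose_zero_right]

lemma mem_msum {α : Type*} {s : Multiset (Multiset α)} {x : α} (h : x ∈ s.sum) :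
    ∃ T ∈ s, x ∈ T := by
  induction s using Multiset.induction with
  | empty => simp at h
  | cons a s ih =>
    rw [Multiset.sum_cons, Multiset.mem_add] at h
    rcases h with h | h
    · exact ⟨a, Multiset.mem_cons_self a s, h⟩
    · obtain ⟨T, hT, hx⟩ := ih h
      exact ⟨T, Multiset.mem_cons_of_mem hT, hx⟩

lemma N_mul_s (n k : ℕ) (hk : 0 < k) (hdvd : k ∣ n) :
    (n-1).choose (k-1) * (n / k) = n.choose k := by
  rcases Nat.eq_zero_or_pos n with rfl | hn
  · simp [Nat.choose_eq_zero_of_lt hk]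
  · have h1 : n.choose k * k = n * (n-1).choose (k-1) := choose_mul_id hn hk
    have h2 : n / k * k = n := Nat.div_mul_cancel hdvd
    have : (n-1).choose (k-1) * (n / k) * k = n.choose k * k := by
      rw [h1, mul_assoc, h2]; ring
    exact Nat.eq_of_mul_eq_mul_right hk this

lemma baranyai_families (n k : ℕ) (hk : 1 < k) (hdvd : k ∣ n) :
    ∀ m, m ≤ n → ∃ f : Fin ((n-1).choose (k-1)) → Multiset (Finset (Fin n)),
      (∀ i, Multiset.card (f i) = n / k) ∧
      (∀ i, ((f i).map Finset.val).sum =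
        (Finset.univ.filter (fun x : Fin n => x.val < m)).val) ∧
      (∀ i, ∀ S ∈ f i, S.card ≤ k) ∧
      (∀ S : Finset (Fin n), (∀ x ∈ S, x.val < m) → S.card ≤ k →
        (∑ i, (f i).count S) = (n - m).choose (k - S.card)) := by
  intro m
  induction m with
  | zero =>
    intro _
    refine ⟨fun _ => Multiset.replicate (n / k) ∅, ?_, ?_, ?_, ?_⟩
    · intro i; simp
    · intro i
      have h0 : (Finset.univ.filter (fun x : Fin n => x.val < 0)) = ∅ := by
        ext x; simp
      rw [h0]
      simp [Multiset.map_replicate]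
    · intro i S hS
      rw [Multiset.eq_of_mem_replicate hS]
      simp
    · intro S hS hSk
      have hSe : S = ∅ := by
        ext x; simp only [Finset.notMem_empty, iff_false]
        intro hx; exact absurd (hS x hx) (by omega)
      subst hSe
      simp only [Multiset.count_replicate, if_pos rfl, Finset.card_empty,
        Nat.sub_zero, Finset.sum_const, Finset.card_univ, Fintype.card_fin, smul_eq_mul]
      exact N_mul_s n k (by omega) hdvd
  | succ m ih =>
    intro hm1
    obtain ⟨f, h1, h2, h3, h4⟩ := ih (by omega)
    exact baranyai_step n k hk hdvd m (by omega) f h1 h2 h3 h4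

lemma baranyai_clique (n k : ℕ) (hk : 1 < k) (hdvd : k ∣ n) (hq : 2 < n / k) :
    ∃ P : Fin ((n-1).choose (k-1)) → KPartition n k,
      Function.Injective P ∧ ∀ i j, i ≠ j → Disjoint (P i).1 (P j).1 := by
  classical
  obtain ⟨f, h1, h2, h3, h4⟩ := baranyai_families n k hk hdvd n le_rfl
  have huniv : (Finset.univ.filter (fun x : Fin n => x.val < n)) = Finset.univ := by
    ext x; simp [x.isLt]
  have h2' : ∀ i, ((f i).map Finset.val).sum = (Finset.univ : Finset (Fin n)).val := by
    intro i; rw [h2 i, huniv]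
  -- every member has card exactly k
  have hck : ∀ i, ∀ S ∈ f i, S.card = k := by
    intro i S hS
    rcases lt_or_eq_of_le (h3 i S hS) with h | h
    · exfalso
      have hlt : ∀ x ∈ S, x.val < n := fun x _ => x.isLt
      have hz := h4 S hlt (h3 i S hS)
      have hz0 : (n - n).choose (k - S.card) = 0 := by
        rw [Nat.sub_self]; exact Nat.choose_eq_zero_of_lt (by omega)
      rw [hz0] at hz
      have hpos : 0 < ∑ j, (f j).count S :=
        Finset.sum_pos' (fun _ _ => Nat.zero_le _)
          ⟨i, Finset.mem_univ i, Multiset.count_pos.mpr hS⟩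
      omega
    · exact h
  -- total count of k-sets is 1
  have hcnt : ∀ S : Finset (Fin n), S.card = k → (∑ i, (f i).count S) = 1 := by
    intro S hS
    have hlt : ∀ x ∈ S, x.val < n := fun x _ => x.isLt
    rw [h4 S hlt hS.le, hS, Nat.sub_self, Nat.sub_self, Nat.choose_self]
  -- uniqueness of parts containing a point
  have hnodup : (Finset.univ : Finset (Fin n)).val.Nodup := Finset.univ.nodup
  have hexu : ∀ i (x : Fin n), ∃! S, S ∈ (f i).toFinset ∧ x ∈ S := by
    intro i x
    have hx : x ∈ ((f i).map Finset.val).sum := by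
      rw [h2' i]; exact Finset.mem_univ_val x
    obtain ⟨T, hT, hxT⟩ := mem_msum hx
    obtain ⟨S, hS, rfl⟩ := Multiset.mem_map.mp hT
    refine ⟨S, ⟨Multiset.mem_toFinset.mpr hS, hxT⟩, ?_⟩
    rintro S' ⟨hS', hxS'⟩
    rw [Multiset.mem_toFinset] at hS'
    by_contra hne
    -- x appears twice in the sum
    have hrest : S ∈ (f i).erase S' :=
      (Multiset.mem_erase_of_ne (fun h => hne h.symm)).mpr hS
    have hle : S'.val + S.val ≤ ((f i).map Finset.val).sum := by
      have hfi : f i = S' ::ₘ (f i).erase S' := (Multiset.cons_erase hS').symm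
      rw [hfi, Multiset.map_cons, Multiset.sum_cons]
      refine add_le_add le_rfl ?_
      exact Multiset.single_le_sum (fun y _ => Multiset.zero_le y) _
        (Multiset.mem_map_of_mem _ hrest)
    have hcount : 2 ≤ Multiset.count x (S'.val + S.val) := by
      rw [Multiset.count_add]
      have c1 : 1 ≤ Multiset.count x S'.val := Multiset.one_le_count_iff_mem.mpr hxS'
      have c2 : 1 ≤ Multiset.count x S.val := Multiset.one_le_count_iff_mem.mpr hxT
      omega
    have := le_trans hcount (Multiset.count_le_of_le x hle)
    rw [h2' i] at this
    have := Multiset.nodup_iff_count_le_one.mp hnodup x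
    omega
  set P : Fin ((n-1).choose (k-1)) → KPartition n k := fun i =>
    ⟨(f i).toFinset, fun S hS => hck i S (Multiset.mem_toFinset.mp hS), hexu i⟩ with hP
  -- pairwise disjointness
  have hdisj : ∀ i j, i ≠ j → Disjoint (P i).1 (P j).1 := by
    intro i j hij
    rw [Finset.disjoint_left]
    intro S hSi hSj
    rw [hP] at hSi hSj
    simp only [Multiset.mem_toFinset] at hSi hSj
    have h1c : 1 ≤ (f i).count S := Multiset.one_le_count_iff_mem.mpr hSi
    have h2c : 1 ≤ (f j).count S := Multiset.one_le_count_iff_mem.mpr hSj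
    have hSk' : S.card = k := hck i S hSi
    have := hcnt S hSk'
    have hle2 : 2 ≤ ∑ l, (f l).count S := by
      have hsub := Finset.sum_le_sum_of_subset (f := fun l => (f l).count S)
        (Finset.subset_univ ({i, j} : Finset (Fin ((n-1).choose (k-1)))))
      rw [Finset.sum_pair hij] at hsub
      exact le_trans (by omega) hsub
    omega
  refine ⟨P, ?_, hdisj⟩
  intro i j hij
  by_contra hne
  have hs : 0 < Multiset.card (f i) := by rw [h1 i]; omega
  obtain ⟨S, hS⟩ := Multiset.card_pos_iff_exists_mem.mp hs
  have hSi : S ∈ (P i).1 := Multiset.mem_toFinset.mpr hS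
  have hSj : S ∈ (P j).1 := by rw [← hij]; exact hSi
  exact Finset.disjoint_left.mp (hdisj i j hne) hSi hSj


/-- For `k > 1` dividing `n` with `n/k > 2`, the graph on partitions of `{1,...,n}`
into `k`-subsets (adjacent when sharing no part) is non-synchronizing: it is neither
null nor complete and its chromatic number equals its clique number. -/
theorem stmt_11 (n k : ℕ) (hk : 1 < k) (hdvd : k ∣ n) (hq : 2 < n / k) :
    kPartitionGraph n k ≠ ⊥ ∧ kPartitionGraph n k ≠ ⊤ ∧
      (kPartitionGraph n k).chromaticNumber = ((kPartitionGraph n k).cliqueNum : ℕ∞) := by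
  classical
  have hn3 : 3 * k ≤ n := by
    have h := Nat.div_mul_cancel hdvd
    have : 3 * k ≤ (n / k) * k := Nat.mul_le_mul_right k (by omega)
    omega
  have hn : 0 < n := by omega
  set N := (n-1).choose (k-1) with hN
  have hN2 : 2 ≤ N := by
    have h1 : k ≤ n - 1 := by omega
    have h2 : k.choose (k-1) ≤ (n-1).choose (k-1) := Nat.choose_le_choose _ h1
    have h3 : k.choose (k-1) = k := by
      obtain ⟨k', rfl⟩ := Nat.exists_eq_succ_of_ne_zero (show k ≠ 0 by omega)
      simp [Nat.succ_sub_one, Nat.choose_succ_self_right]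
    omega
  obtain ⟨P, Pinj, Pdisj⟩ := baranyai_clique n k hk hdvd hq
  have hadj : ∀ i j, i ≠ j → (kPartitionGraph n k).Adj (P i) (P j) := by
    intro i j hij
    exact (⟨fun h => hij (Pinj h), Pdisj i j hij⟩ : P i ≠ P j ∧ Disjoint (P i).1 (P j).1)
  -- the clique
  set K : Finset (KPartition n k) := Finset.univ.image P with hK
  have hKcard : K.card = N := by
    rw [hK, Finset.card_image_of_injective _ Pinj, Finset.card_univ, Fintype.card_fin]
  have hKclique : (kPartitionGraph n k).IsClique K := by
    intro a ha b hb hab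
    simp only [hK, Finset.coe_image, Set.mem_image] at ha hb
    obtain ⟨i, _, rfl⟩ := ha
    obtain ⟨j, _, rfl⟩ := hb
    exact hadj i j (fun h => hab (congrArg P h))
  -- colour data
  set x0 : Fin n := ⟨0, hn⟩ with hx0
  have hex : ∀ Q : KPartition n k, ∃! s, s ∈ Q.1 ∧ x0 ∈ s := fun Q => Q.2.2 x0
  set part0 : KPartition n k → Finset (Fin n) :=
    fun Q => Finset.choose (fun s => x0 ∈ s) Q.1 (hex Q) with hpart0
  have hpmem : ∀ Q, part0 Q ∈ Q.1 :=
    fun Q => Finset.choose_mem (fun s => x0 ∈ s) Q.1 (hex Q)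
  have hpx : ∀ Q, x0 ∈ part0 Q :=
    fun Q => Finset.choose_property (fun s => x0 ∈ s) Q.1 (hex Q)
  have hpcard : ∀ Q, (part0 Q).card = k := fun Q => Q.2.1 _ (hpmem Q)
  have hkey : ∀ Q R : KPartition n k, (kPartitionGraph n k).Adj Q R → part0 Q ≠ part0 R := by
    intro Q R h hpe
    exact (Finset.disjoint_left.mp (show Q ≠ R ∧ Disjoint Q.1 R.1 from h).2 (hpmem Q)) (hpe ▸ hpmem R)
  set s₀ : Finset (Finset (Fin n)) :=
    (Finset.univ.erase x0).powersetCard (k-1) with hs₀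
  have hs₀card : s₀.card = N := by
    rw [hs₀, Finset.card_powersetCard, Finset.card_erase_of_mem (Finset.mem_univ x0),
      Finset.card_univ, Fintype.card_fin]
  have hcmem : ∀ Q : KPartition n k, (part0 Q).erase x0 ∈ s₀ := by
    intro Q
    rw [hs₀, Finset.mem_powersetCard]
    constructor
    · intro y hy
      exact Finset.mem_erase.mpr ⟨(Finset.mem_erase.mp hy).1, Finset.mem_univ y⟩
    · rw [Finset.card_erase_of_mem (hpx Q), hpcard Q]
  have hcinj : ∀ Q R : KPartition n k, (part0 Q).erase x0 = (part0 R).erase x0 →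
      part0 Q = part0 R := by
    intro Q R h
    rw [← Finset.insert_erase (hpx Q), ← Finset.insert_erase (hpx R), h]
  -- the coloring
  set C : (kPartitionGraph n k).Coloring ↥s₀ := SimpleGraph.Coloring.mk
    (fun Q => ⟨(part0 Q).erase x0, hcmem Q⟩)
    (fun {Q R} hQR h => hkey Q R hQR (hcinj Q R (congrArg Subtype.val h)))
    with hC
  have hcol : (kPartitionGraph n k).Colorable N := by
    have := C.colorable
    rwa [Fintype.card_coe, hs₀card] at this
  -- chromatic number = N
  have hchrom : (kPartitionGraph n k).chromaticNumber = (N : ℕ∞) := by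
    refine le_antisymm hcol.chromaticNumber_le ?_
    have := hKclique.card_le_chromaticNumber
    rwa [hKcard] at this
  -- clique number = N
  have hcliq : (kPartitionGraph n k).cliqueNum = N := by
    refine le_antisymm ?_ ?_
    · obtain ⟨t, ht⟩ := (kPartitionGraph n k).exists_isNClique_cliqueNum
      rw [← ht.card_eq, ← hs₀card]
      refine Finset.card_le_card_of_injOn (fun Q => (part0 Q).erase x0)
        (fun Q _ => hcmem Q) ?_
      intro a ha b hb h
      by_contra hab
      exact hkey a b (ht.isClique ha hb hab) (hcinj a b h)
    · rw [← hKcard]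
      exact SimpleGraph.IsClique.card_le_cliqueNum (tc := hKclique)
  refine ⟨?_, ?_, ?_⟩
  · -- not bot
    intro hbot
    have h01 : (⟨0, by omega⟩ : Fin N) ≠ ⟨1, by omega⟩ :=
      Fin.ne_of_val_ne (by norm_num)
    have hadj2 := hadj _ _ h01
    have hfa : (kPartitionGraph n k).Adj = (⊥ : SimpleGraph (KPartition n k)).Adj :=
      congrArg SimpleGraph.Adj hbot
    rw [hfa] at hadj2
    simp at hadj2
  · -- not top
    intro htop
    -- build two distinct non-adjacent partitions
    set Q : KPartition n k := P ⟨0, by omega⟩ with hQ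
    set A : Finset (Fin n) := part0 Q with hA
    have hAmem : A ∈ Q.1 := hpmem Q
    have hAcard : A.card = k := hpcard Q
    -- u outside A
    have hucard : (Aᶜ : Finset (Fin n)).Nonempty := by
      rw [← Finset.card_pos, Finset.card_compl, hAcard, Fintype.card_fin]
      omega
    obtain ⟨u, hu⟩ := hucard
    have huA : u ∉ A := Finset.mem_compl.mp hu
    obtain ⟨B, ⟨hBmem, huB⟩, hBuniq⟩ := Q.2.2 u
    have hBcard : B.card = k := Q.2.1 _ hBmem
    -- v outside A ∪ B
    have hvcard : ((A ∪ B)ᶜ : Finset (Fin n)).Nonempty := by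
      rw [← Finset.card_pos, Finset.card_compl, Fintype.card_fin]
      have : (A ∪ B).card ≤ 2 * k := by
        have := Finset.card_union_le A B
        omega
      omega
    obtain ⟨v, hv⟩ := hvcard
    have hvAB : v ∉ A ∪ B := Finset.mem_compl.mp hv
    have hvA : v ∉ A := fun h => hvAB (Finset.mem_union_left _ h)
    have hvB : v ∉ B := fun h => hvAB (Finset.mem_union_right _ h)
    obtain ⟨Cp, ⟨hCmem, hvC⟩, hCuniq⟩ := Q.2.2 v
    have hCcard : Cp.card = k := Q.2.1 _ hCmem
    have huv : u ≠ v := fun h => hvB (h ▸ huB)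
    have hBC : B ≠ Cp := fun h => hvB (h ▸ hvC)
    have huC : u ∉ Cp := by
      intro h
      exact hBC (hBuniq Cp ⟨hCmem, h⟩).symm
    set π : Equiv.Perm (Fin n) := Equiv.swap u v with hπ
    -- image partition
    have hπinj : Function.Injective (π : Fin n → Fin n) := π.injective
    have hRpart : (∀ s ∈ Q.1.image (fun S => S.image π), s.card = k) ∧
        ∀ x : Fin n, ∃! s, s ∈ Q.1.image (fun S => S.image π) ∧ x ∈ s := by
      constructor
      · intro s hs
        obtain ⟨S, hS, rfl⟩ := Finset.mem_image.mp hs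
        rw [Finset.card_image_of_injective _ hπinj]
        exact Q.2.1 S hS
      · intro x
        obtain ⟨S, ⟨hS, hxS⟩, hSuniq⟩ := Q.2.2 (π.symm x)
        refine ⟨S.image π, ⟨Finset.mem_image_of_mem _ hS, ?_⟩, ?_⟩
        · have : π (π.symm x) = x := π.apply_symm_apply x
          rw [← this]
          exact Finset.mem_image_of_mem _ hxS
        · rintro T ⟨hT, hxT⟩
          obtain ⟨T₀, hT₀, rfl⟩ := Finset.mem_image.mp hT
          obtain ⟨y, hy, hyx⟩ := Finset.mem_image.mp hxT
          have hyy : y = π.symm x := by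
            rw [← hyx, Equiv.symm_apply_apply]
          congr 1
          exact hSuniq T₀ ⟨hT₀, hyy ▸ hy⟩
    set R : KPartition n k := ⟨Q.1.image (fun S => S.image π), hRpart⟩ with hR
    -- A is a common part
    have hAfix : A.image π = A := by
      ext y
      constructor
      · intro hy
        obtain ⟨z, hz, rfl⟩ := Finset.mem_image.mp hy
        rw [hπ, Equiv.swap_apply_of_ne_of_ne
          (fun h => huA (by rw [← h]; exact hz)) (fun h => hvA (by rw [← h]; exact hz))]
        exact hz
      · intro hy
        refine Finset.mem_image.mpr ⟨y, hy, ?_⟩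
        rw [hπ, Equiv.swap_apply_of_ne_of_ne
          (fun h => huA (by rw [← h]; exact hy)) (fun h => hvA (by rw [← h]; exact hy))]
    have hAR : A ∈ R.1 := by
      rw [hR]
      exact hAfix ▸ Finset.mem_image_of_mem _ hAmem
    have hnotdisj : ¬ Disjoint Q.1 R.1 :=
      Finset.not_disjoint_iff.mpr ⟨A, hAmem, hAR⟩
    -- R ≠ Q
    have hRQ : R ≠ Q := by
      intro h
      have hCim : Cp.image π ∈ Q.1 := by
        rw [← congrArg Subtype.val h, hR]
        exact Finset.mem_image_of_mem _ hCmem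
      have huCim : u ∈ Cp.image π := by
        refine Finset.mem_image.mpr ⟨v, hvC, ?_⟩
        rw [hπ, Equiv.swap_apply_right]
      have hBeq : Cp.image π = B := hBuniq _ ⟨hCim, huCim⟩
      -- pick w ∈ Cp, w ≠ v
      have hwex : (Cp.erase v).Nonempty := by
        rw [← Finset.card_pos, Finset.card_erase_of_mem hvC, hCcard]
        omega
      obtain ⟨w, hw⟩ := hwex
      have hwv : w ≠ v := Finset.ne_of_mem_erase hw
      have hwC : w ∈ Cp := Finset.mem_of_mem_erase hw
      have hwu : w ≠ u := fun h => huC (h ▸ hwC)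
      have hwB : w ∈ B := by
        rw [← hBeq]
        refine Finset.mem_image.mpr ⟨w, hwC, ?_⟩
        rw [hπ, Equiv.swap_apply_of_ne_of_ne hwu hwv]
      obtain ⟨D, _, hDuniq⟩ := Q.2.2 w
      have hd1 : B = D := hDuniq B ⟨hBmem, hwB⟩
      have hd2 : Cp = D := hDuniq Cp ⟨hCmem, hwC⟩
      exact hBC (hd1.trans hd2.symm)
    have hQR : (kPartitionGraph n k).Adj Q R := by
      have hfa : (kPartitionGraph n k).Adj = (⊤ : SimpleGraph (KPartition n k)).Adj :=
        congrArg SimpleGraph.Adj htop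
      rw [hfa]
      exact fun h => hRQ h.symm
    exact hnotdisj (show Q ≠ R ∧ Disjoint Q.1 R.1 from hQR).2
  · rw [hchrom, hcliq]
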